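/- For p = 1/2, the magnitude of the k=1 streak selection bias, b(n) = 1/2 − E[P̂_1 | I_1 ≠ ∅], is strictly positive for all n ≥ 3 and tends to 0 as n → ∞. -/

import Mathlib

open Filter

/-- The closed-form expected proportion for p = 1/2 and k = 1. -/
noncomputable def expProp (n : ℕ) : ℝ :=
  (((1:ℝ)/2 - (1 - (1/2) ^ n) / n) * ((n : ℝ) / ((n : ℝ) - 1))) / (1 - (1/2) ^ (n - 1))

lemma key (n : ℕ) (hn : 3 ≤ n) :
    1 / 2 - expProp n
      = (1/2 - (n:ℝ) * (1/2)^n) / (((n:ℝ) - 1) * (1 - (1/2:ℝ)^(n-1))) := by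
  obtain ⟨m, rfl⟩ : ∃ m, n = m + 1 := ⟨n - 1, by omega⟩
  have hm : 2 ≤ m := by omega
  have hm0 : (0:ℝ) < m := by exact_mod_cast Nat.lt_of_lt_of_le Nat.zero_lt_two hm
  have h1 : ((m:ℝ) + 1) ≠ 0 := by positivity
  have hp : (1:ℝ) - (1/2)^m ≠ 0 := by
    have : ((1:ℝ)/2)^m < 1 := pow_lt_one₀ (by norm_num) (by norm_num) (by omega)
    linarith
  unfold expProp
  simp only [Nat.add_sub_cancel]
  push_cast
  have hm1 : (m:ℝ) + 1 - 1 ≠ 0 := by simpa using ne_of_gt hm0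
  have hx : ((1:ℝ)/2)^(m+1) = (1/2)^m * (1/2) := pow_succ _ _
  rw [hx]
  set x := ((1:ℝ)/2)^m with hxdef
  field_simp
  ring

lemma nat_bound (n : ℕ) (hn : 3 ≤ n) : 2 * n < 2 ^ n := by
  induction n with
  | zero => omega
  | succ k ih =>
    rcases Nat.lt_or_ge k 3 with h | h
    · interval_cases k <;> simp_all
    · have := ih (by omega)
      have h2 : 2 ^ k ≥ 2 := Nat.one_lt_two_pow (by omega)
      rw [pow_succ]; omega

/-- The magnitude of the k = 1 streak selection bias for a fair coin is strictly
positive for all n ≥ 3 and vanishes as n → ∞. -/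
theorem stmt19 :
    (∀ n : ℕ, 3 ≤ n → 0 < 1 / 2 - expProp n) ∧
    Tendsto (fun n : ℕ => 1 / 2 - expProp n) atTop (nhds 0) := by
  have hnum : ∀ n : ℕ, 3 ≤ n → 0 < 1/2 - (n:ℝ) * (1/2)^n := by
    intro n hn
    have h := nat_bound n hn
    have h' : (2:ℝ) * n < 2 ^ n := by exact_mod_cast h
    have hpow : (0:ℝ) < 2 ^ n := by positivity
    have : (n:ℝ) * (1/2)^n = n / 2^n := by
      rw [div_pow]; ring
    rw [this]
    rw [sub_pos, div_lt_iff₀ hpow]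
    linarith
  have hden : ∀ n : ℕ, 3 ≤ n → 0 < ((n:ℝ) - 1) * (1 - (1/2:ℝ)^(n-1)) := by
    intro n hn
    have h1 : (0:ℝ) < (n:ℝ) - 1 := by
      have : (3:ℝ) ≤ n := by exact_mod_cast hn
      linarith
    have h2 : ((1:ℝ)/2)^(n-1) < 1 := pow_lt_one₀ (by norm_num) (by norm_num) (by omega)
    have : (0:ℝ) < 1 - (1/2:ℝ)^(n-1) := by linarith
    positivity
  constructor
  · intro n hn
    rw [key n hn]
    exact div_pos (hnum n hn) (hden n hn)
  · apply squeeze_zero' (g := fun n : ℕ => 1 / ((n:ℝ) - 1))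
    · filter_upwards [eventually_ge_atTop 3] with n hn
      rw [key n hn]
      exact le_of_lt (div_pos (hnum n hn) (hden n hn))
    · filter_upwards [eventually_ge_atTop 3] with n hn
      rw [key n hn]
      have h1 : (0:ℝ) < (n:ℝ) - 1 := by
        have : (3:ℝ) ≤ n := by exact_mod_cast hn
        linarith
      have hN : 1/2 - (n:ℝ) * (1/2)^n ≤ 1/2 := by
        have : (0:ℝ) ≤ (n:ℝ) * (1/2)^n := by positivity
        linarith
      have hD : ((n:ℝ) - 1) * (1/2) ≤ ((n:ℝ) - 1) * (1 - (1/2:ℝ)^(n-1)) := by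
        have : ((1:ℝ)/2)^(n-1) ≤ 1/2 := by
          calc ((1:ℝ)/2)^(n-1) ≤ (1/2)^1 :=
            pow_le_pow_of_le_one (by norm_num) (by norm_num) (by omega)
          _ = 1/2 := by norm_num
        nlinarith
      have hD0 : (0:ℝ) < ((n:ℝ) - 1) * (1/2) := by positivity
      calc (1/2 - (n:ℝ) * (1/2)^n) / (((n:ℝ) - 1) * (1 - (1/2:ℝ)^(n-1)))
          ≤ (1/2) / (((n:ℝ) - 1) * (1/2)) :=
            div_le_div₀ (by norm_num) hN hD0 hD
        _ = 1 / ((n:ℝ) - 1) := by field_simp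
    · have : Tendsto (fun n : ℕ => (n:ℝ) - 1) atTop atTop :=
        tendsto_atTop_add_const_right _ _ tendsto_natCast_atTop_atTop
      simpa [one_div, Pi.inv_def] using this.inv_tendsto_atTop
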